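/- The natural extension (X̂, T̂) of a compact metric dynamical system (X,T) is sensitive if and only if (X,T) is sensitive. -/

import Mathlib

open Set Function Metric

/-- Sensitivity of a map `F` on a topological space, with respect to a distance
function `d` (which is assumed compatible with the topology). -/
def SensitiveWith {Z : Type*} [TopologicalSpace Z] (d : Z → Z → ℝ) (F : Z → Z) : Prop :=
  ∃ δ > (0 : ℝ), ∀ U : Set Z, IsOpen U → U.Nonempty →
    ∃ u ∈ U, ∃ v ∈ U, ∃ n : ℕ, δ < d (F^[n] u) (F^[n] v)

/-- The natural extension of `(X, T)`. -/
def NatExt {X : Type*} [MetricSpace X] (T : X → X) : Type _ :=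
  {f : ℕ → X // ∀ i : ℕ, T (f (i + 1)) = f i}

instance {X : Type*} [MetricSpace X] (T : X → X) : TopologicalSpace (NatExt T) :=
  instTopologicalSpaceSubtype

/-- The shift map on the natural extension. -/
def natExtMap {X : Type*} [MetricSpace X] (T : X → X) (f : NatExt T) : NatExt T :=
  ⟨fun n => Nat.rec (T (f.1 0)) (fun i _ => f.1 i) n, by
    intro i
    cases i with
    | zero => rfl
    | succ n => exact f.2 n⟩

/-- The metric on the natural extension from the paper. -/
noncomputable def natExtDist {X : Type*} [MetricSpace X] (T : X → X)
    (f g : NatExt T) : ℝ :=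
  ∑' n : ℕ, dist (f.1 n) (g.1 n) / (2 ^ (n + 1) * (Metric.diam (Set.univ : Set X) + 1))

set_option linter.unusedSectionVars false
set_option linter.unusedVariables false

namespace NatExtAux
variable {X : Type*} [MetricSpace X] [CompactSpace X] {T : X → X}

lemma M_pos : (0:ℝ) < Metric.diam (Set.univ : Set X) + 1 := by
  have := Metric.diam_nonneg (s := (Set.univ : Set X)); linarith

lemma dist_le_D (x y : X) : dist x y ≤ Metric.diam (Set.univ : Set X) :=
  Metric.dist_le_diam_of_mem isCompact_univ.isBounded (mem_univ x) (mem_univ y)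

noncomputable def w (X : Type*) [MetricSpace X] (k : ℕ) : ℝ :=
  (1/2)^k * (1/(2*(Metric.diam (Set.univ : Set X) + 1)))

lemma w_pos (k : ℕ) : 0 < w X k := by
  have h := M_pos (X := X)
  unfold w; positivity

lemma term_eq (f g : NatExt T) (k : ℕ) :
    dist (f.1 k) (g.1 k) / (2 ^ (k + 1) * (Metric.diam (Set.univ : Set X) + 1))
      = dist (f.1 k) (g.1 k) * w X k := by
  have h := M_pos (X := X)
  unfold w
  rw [div_eq_mul_inv]
  congr 1
  rw [pow_succ]
  field_simp
  rw [← mul_pow]; norm_num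

lemma summable_w : Summable (w X) :=
  summable_geometric_two.mul_right _

lemma tsum_w : ∑' k, w X k = 1 / (Metric.diam (Set.univ : Set X) + 1) := by
  have h := M_pos (X := X)
  unfold w
  rw [tsum_mul_right, tsum_geometric_two]
  field_simp

lemma summable_term (f g : NatExt T) :
    Summable (fun k => dist (f.1 k) (g.1 k) * w X k) := by
  refine Summable.of_nonneg_of_le (fun k => ?_)
    (fun k => ?_) ((summable_w (X := X)).mul_left (Metric.diam (Set.univ : Set X)))
  · exact mul_nonneg dist_nonneg (w_pos k).le
  · exact mul_le_mul_of_nonneg_right (dist_le_D _ _) (w_pos k).le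

lemma natExtDist_eq (f g : NatExt T) :
    natExtDist T f g = ∑' k, dist (f.1 k) (g.1 k) * w X k := by
  unfold natExtDist
  exact tsum_congr (term_eq f g)

lemma le_natExtDist (f g : NatExt T) (k : ℕ) :
    dist (f.1 k) (g.1 k) * w X k ≤ natExtDist T f g := by
  rw [natExtDist_eq]
  exact Summable.le_tsum (summable_term f g) k (fun j _ => mul_nonneg dist_nonneg (w_pos j).le)


lemma natExtMap_fst_zero (f : NatExt T) : (natExtMap T f).1 0 = T (f.1 0) := rfl

lemma natExtMap_fst_succ (f : NatExt T) (k : ℕ) : (natExtMap T f).1 (k+1) = f.1 k := rfl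

lemma iter_coord (n : ℕ) : ∀ (f : NatExt T) (k : ℕ),
    ((natExtMap T)^[n] f).1 k = if k < n then T^[n-k] (f.1 0) else f.1 (k - n) := by
  induction n with
  | zero => intro f k; simp
  | succ n ih =>
    intro f k
    rw [Function.iterate_succ_apply', natExtMap]
    cases k with
    | zero =>
      simp only [Nat.zero_lt_succ, if_true]
      show T (((natExtMap T)^[n] f).1 0) = T^[n+1-0] (f.1 0)
      rw [ih f 0]
      by_cases h : 0 < n
      · simp only [h, if_true, Nat.sub_zero]
        rw [← Function.iterate_succ_apply' T n]
      · simp only [h, if_false]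
        have : n = 0 := by omega
        subst this; simp
    | succ k =>
      show ((natExtMap T)^[n] f).1 k = _
      rw [ih f k]
      have h1 : k < n ↔ k + 1 < n + 1 := by omega
      have h2 : n - k = n + 1 - (k + 1) := by omega
      have h3 : k - n = k + 1 - (n + 1) := by omega
      rw [h2, h3]
      exact if_congr h1 rfl rfl

lemma iter_coord_zero (n : ℕ) (f : NatExt T) :
    ((natExtMap T)^[n] f).1 0 = T^[n] (f.1 0) := by
  rw [iter_coord]
  by_cases h : 0 < n
  · simp [h]
  · have : n = 0 := by omega
    subst this; simp

lemma orbit_rel (f : NatExt T) (i : ℕ) : ∀ m : ℕ, T^[m] (f.1 (i + m)) = f.1 i := by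
  intro m
  induction m with
  | zero => simp
  | succ m ih =>
    rw [Function.iterate_succ_apply, show i + (m+1) = (i + m) + 1 from by ring, f.2 (i + m)]
    exact ih

/-- lift of `x` at level `N` -/
noncomputable def liftAt (hTs : Surjective T) (x : X) (N : ℕ) : NatExt T :=
  ⟨fun i => if i ≤ N then T^[N - i] x else (surjInv hTs)^[i - N] x, by
    intro i
    by_cases h1 : i + 1 ≤ N
    · simp only [h1, if_true, show i ≤ N by omega, if_true]
      rw [← Function.iterate_succ_apply' T]
      congr 1; omega
    · by_cases h2 : i ≤ N
      · simp only [h1, if_false, h2, if_true]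
        rw [show i + 1 - N = 1 from by omega, show N - i = 0 from by omega]
        simp [surjInv_eq hTs]
      · simp only [h1, h2, if_false]
        have h3 : i + 1 - N = (i - N) + 1 := by omega
        rw [h3, Function.iterate_succ_apply']
        rw [surjInv_eq hTs]⟩

lemma liftAt_le (hTs : Surjective T) (x : X) (N i : ℕ) (h : i ≤ N) :
    (liftAt hTs x N).1 i = T^[N - i] x := by
  simp [liftAt, h]

lemma liftAt_self (hTs : Surjective T) (x : X) (N : ℕ) :
    (liftAt hTs x N).1 N = x := by
  simp [liftAt]

lemma cont_proj (k : ℕ) : Continuous (fun f : NatExt T => f.1 k) :=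
  (continuous_apply k).comp continuous_subtype_val


lemma exists_cylinder {U : Set (NatExt T)} (hU : IsOpen U) {f : NatExt T} (hf : f ∈ U) :
    ∃ (N : ℕ) (ε : ℝ), 0 < ε ∧
      ∀ g : NatExt T, (∀ k, k ≤ N → dist (g.1 k) (f.1 k) < ε) → g ∈ U := by
  obtain ⟨V, hV, hVU⟩ := isOpen_induced_iff.mp hU
  have hfV : f.1 ∈ V := by rw [← hVU] at hf; exact hf
  obtain ⟨I, u, hu, hIu⟩ := isOpen_pi_iff.mp hV f.1 hfV
  rcases I.eq_empty_or_nonempty with hI | hI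
  · refine ⟨0, 1, one_pos, fun g _ => ?_⟩
    rw [← hVU]
    refine hIu ?_
    intro a ha
    simp [hI] at ha
  · have hex : ∀ a ∈ I, ∃ εa, 0 < εa ∧ Metric.ball (f.1 a) εa ⊆ u a := fun a ha => by
      obtain ⟨εa, h1, h2⟩ := Metric.isOpen_iff.mp (hu a ha).1 _ (hu a ha).2
      exact ⟨εa, h1, h2⟩
    choose! εa hεa hba using hex
    refine ⟨I.sup id, I.inf' hI εa, ?_, ?_⟩
    · exact (Finset.lt_inf'_iff hI).mpr (fun a ha => hεa a ha)
    · intro g hg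
      rw [← hVU]
      refine hIu ?_
      intro a ha
      have haI : a ∈ I := ha
      refine hba a haI ?_
      have h1 : dist (g.1 a) (f.1 a) < I.inf' hI εa :=
        hg a (Finset.le_sup (f := id) haI)
      exact Metric.mem_ball.mpr (lt_of_lt_of_le h1 (Finset.inf'_le _ haI))

lemma sens_of (hT : Continuous T) (hTs : Surjective T)
    (h : SensitiveWith dist T) : SensitiveWith (natExtDist T) (natExtMap T) := by
  obtain ⟨δ, hδ, hsen⟩ := h
  have hw0 := w_pos (X := X) 0
  refine ⟨δ * w X 0, by positivity, ?_⟩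
  rintro U hU ⟨f, hf⟩
  obtain ⟨N, ε, hε, hcyl⟩ := exists_cylinder hU hf
  set r := min ε (δ/2) with hr
  have hrpos : 0 < r := lt_min hε (by linarith)
  set W : Set X := ⋂ i ∈ Finset.range (N+1),
    (T^[i]) ⁻¹' Metric.ball (T^[i] (f.1 N)) r with hW
  have hWopen : IsOpen W :=
    isOpen_biInter_finset (fun i _ => (isOpen_ball).preimage (hT.iterate i))
  have hWmem : f.1 N ∈ W := by
    rw [hW]
    simp only [Set.mem_iInter, Set.mem_preimage]
    intro i _
    exact Metric.mem_ball_self hrpos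
  have hW' : ∀ x ∈ W, ∀ i, i ≤ N → dist (T^[i] x) (T^[i] (f.1 N)) < r := by
    intro x hx i hi
    rw [hW] at hx
    simp only [Set.mem_iInter, Set.mem_preimage, Metric.mem_ball] at hx
    exact hx i (Finset.mem_range.mpr (by omega))
  obtain ⟨a, ha, b, hb, n, hn⟩ := hsen W hWopen ⟨f.1 N, hWmem⟩
  have hNn : N < n := by
    by_contra hc
    push_neg at hc
    have h1 := hW' a ha n hc
    have h2 := hW' b hb n hc
    have h3 : dist (T^[n] a) (T^[n] b)
        ≤ dist (T^[n] a) (T^[n] (f.1 N)) + dist (T^[n] (f.1 N)) (T^[n] b) :=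
      dist_triangle _ _ _
    rw [dist_comm (T^[n] (f.1 N))] at h3
    have hrδ : r ≤ δ/2 := min_le_right _ _
    linarith
  have hlift : ∀ c, c ∈ W → liftAt hTs c N ∈ U := by
    intro c hc
    apply hcyl
    intro k hk
    rw [liftAt_le _ _ _ _ hk]
    have horb : T^[N-k] (f.1 N) = f.1 k := by
      have h4 := orbit_rel f k (N - k)
      rwa [show k + (N - k) = N from by omega] at h4
    rw [← horb]
    exact lt_of_lt_of_le (hW' c hc (N-k) (by omega)) (min_le_left _ _)
  refine ⟨liftAt hTs a N, hlift a ha, liftAt hTs b N, hlift b hb, n - N, ?_⟩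
  have hcoord : ∀ c, ((natExtMap T)^[n-N] (liftAt hTs c N)).1 0 = T^[n] c := by
    intro c
    rw [iter_coord_zero, liftAt_le _ _ _ 0 (by omega)]
    rw [← Function.iterate_add_apply]
    congr 1
    omega
  calc δ * w X 0 < dist (T^[n] a) (T^[n] b) * w X 0 :=
        (mul_lt_mul_iff_of_pos_right hw0).mpr hn
    _ = dist (((natExtMap T)^[n-N] (liftAt hTs a N)).1 0)
          (((natExtMap T)^[n-N] (liftAt hTs b N)).1 0) * w X 0 := by
        rw [hcoord, hcoord]
    _ ≤ _ := le_natExtDist _ _ 0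


lemma sens_to (hT : Continuous T) (hTs : Surjective T)
    (h : SensitiveWith (natExtDist T) (natExtMap T)) : SensitiveWith dist T := by
  classical
  obtain ⟨δ', hδ', hsen⟩ := h
  set D : ℝ := Metric.diam (Set.univ : Set X) with hD
  set M : ℝ := D + 1 with hMdef
  have hM : (0:ℝ) < M := M_pos (X := X)
  have hD0 : 0 ≤ D := Metric.diam_nonneg
  refine ⟨δ' * M / 2, by positivity, ?_⟩
  rintro U hU ⟨x, hx⟩
  set ε : ℝ := δ' * M / 8 with hεdef
  have hε : 0 < ε := by positivity
  obtain ⟨m, hm⟩ : ∃ m : ℕ, D * (1/2)^m / M < δ'/4 := by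
    obtain ⟨m, hm⟩ := exists_pow_lt_of_lt_one (show (0:ℝ) < δ'/4 by linarith)
      (show (1:ℝ)/2 < 1 by norm_num)
    refine ⟨m, ?_⟩
    have h1 : D / M < 1 := by rw [div_lt_one hM]; linarith
    have h2 : (0:ℝ) < (1/2:ℝ)^m := by positivity
    calc D * (1/2)^m / M = (D / M) * (1/2)^m := by ring
      _ ≤ 1 * (1/2)^m := by nlinarith
      _ < δ'/4 := by rw [one_mul]; exact hm
  set h0 : NatExt T := liftAt hTs x 0 with hh0
  set V : Set (NatExt T) := ((fun f : NatExt T => f.1 0) ⁻¹' U) ∩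
    ⋂ k ∈ Finset.range (m+1),
      (fun f : NatExt T => f.1 k) ⁻¹' Metric.ball (h0.1 k) ε with hV
  have hVopen : IsOpen V := by
    apply IsOpen.inter (hU.preimage (cont_proj 0))
    exact isOpen_biInter_finset (fun k _ => isOpen_ball.preimage (cont_proj k))
  have hVmem : h0 ∈ V := by
    constructor
    · show h0.1 0 ∈ U
      rw [hh0, liftAt_self]
      exact hx
    · simp only [Set.mem_iInter, Set.mem_preimage]
      intro k _
      exact Metric.mem_ball_self hε
  obtain ⟨f, hfV, g, hgV, n, hn⟩ := hsen V hVopen ⟨h0, hVmem⟩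
  have hVf : ∀ p : NatExt T, p ∈ V →
      p.1 0 ∈ U ∧ ∀ k, k ≤ m → dist (p.1 k) (h0.1 k) < ε := by
    intro p hp
    obtain ⟨hp1, hp2⟩ := hp
    simp only [Set.mem_iInter, Set.mem_preimage, Metric.mem_ball] at hp2
    exact ⟨hp1, fun k hk => hp2 k (Finset.mem_range.mpr (by omega))⟩
  refine ⟨f.1 0, (hVf f hfV).1, g.1 0, (hVf g hgV).1, ?_⟩
  by_contra hc
  push_neg at hc
  -- now bound natExtDist of iterates
  set F := (natExtMap T)^[n] f with hF
  set G := (natExtMap T)^[n] g with hG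
  have hA : ∀ k, k ≤ n → dist (F.1 k) (G.1 k) ≤ δ' * M / 2 := by
    intro k hk
    rw [hF, hG, iter_coord, iter_coord]
    by_cases hlt : k < n
    · simp only [hlt, if_true]
      exact hc (n - k)
    · simp only [hlt, if_false]
      have : k - n = 0 := by omega
      rw [this]
      have := hc 0
      simpa using this
  have hB : ∀ k, n < k → k ≤ n + m → dist (F.1 k) (G.1 k) ≤ 2 * ε := by
    intro k hk1 hk2
    rw [hF, hG, iter_coord, iter_coord]
    simp only [show ¬ k < n from by omega, if_false]
    have hkm : k - n ≤ m := by omega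
    have h1 := (hVf f hfV).2 (k-n) hkm
    have h2 := (hVf g hgV).2 (k-n) hkm
    calc dist (f.1 (k-n)) (g.1 (k-n))
        ≤ dist (f.1 (k-n)) (h0.1 (k-n)) + dist (h0.1 (k-n)) (g.1 (k-n)) :=
          dist_triangle _ _ _
      _ ≤ 2 * ε := by rw [dist_comm (h0.1 (k-n))]; linarith
  -- split the sum at K = n + m + 1
  set K := n + m + 1 with hK
  have hsumm := summable_term (T := T) F G
  have hsplit := (Summable.sum_add_tsum_nat_add (f := fun k => dist (F.1 k) (G.1 k) * w X k) K hsumm).symm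
  have hhead : ∑ k ∈ Finset.range K, dist (F.1 k) (G.1 k) * w X k
      ≤ (δ' * M / 2 + 2 * ε) * (1 / M) := by
    calc ∑ k ∈ Finset.range K, dist (F.1 k) (G.1 k) * w X k
        ≤ ∑ k ∈ Finset.range K, (δ' * M / 2 + 2 * ε) * w X k := by
          refine Finset.sum_le_sum (fun k hk => ?_)
          refine mul_le_mul_of_nonneg_right ?_ (w_pos k).le
          by_cases hkn : k ≤ n
          · have := hA k hkn; linarith
          · have := hB k (by omega) (by rw [Finset.mem_range] at hk; omega)
            linarith
      _ = (δ' * M / 2 + 2 * ε) * ∑ k ∈ Finset.range K, w X k := by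
          rw [Finset.mul_sum]
      _ ≤ (δ' * M / 2 + 2 * ε) * (1 / M) := by
          refine mul_le_mul_of_nonneg_left ?_ (by positivity)
          rw [← tsum_w (X := X)]
          exact Summable.sum_le_tsum _ (fun k _ => (w_pos k).le) (summable_w (X := X))
  have htail : ∑' i : ℕ, dist (F.1 (i + K)) (G.1 (i + K)) * w X (i + K)
      ≤ D * (1/2)^m / M := by
    have hbound : ∀ i : ℕ, dist (F.1 (i + K)) (G.1 (i + K)) * w X (i + K)
        ≤ (D * (1/2)^m * (1/(2*M)) * (1/2)) * (1/2)^i := by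
      intro i
      have h1 : dist (F.1 (i + K)) (G.1 (i + K)) * w X (i + K) ≤ D * w X (i + K) :=
        mul_le_mul_of_nonneg_right (dist_le_D _ _) (w_pos _).le
      have h2 : w X (i + K) ≤ (1/2)^(i + m + 1) * (1/(2*M)) := by
        unfold w
        refine mul_le_mul_of_nonneg_right ?_ (by positivity)
        exact pow_le_pow_of_le_one (by norm_num) (by norm_num) (by omega)
      calc dist (F.1 (i + K)) (G.1 (i + K)) * w X (i + K)
          ≤ D * ((1/2)^(i + m + 1) * (1/(2*M))) := by
            refine le_trans h1 (mul_le_mul_of_nonneg_left h2 hD0)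
        _ = (D * (1/2)^m * (1/(2*M)) * (1/2)) * (1/2)^i := by
            rw [pow_add, pow_add]
            ring
    calc ∑' i : ℕ, dist (F.1 (i + K)) (G.1 (i + K)) * w X (i + K)
        ≤ ∑' i : ℕ, (D * (1/2)^m * (1/(2*M)) * (1/2)) * (1/2)^i := by
          refine Summable.tsum_le_tsum hbound ((summable_nat_add_iff K).mpr hsumm) ?_
          exact summable_geometric_two.mul_left _
      _ = (D * (1/2)^m * (1/(2*M)) * (1/2)) * 2 := by
          rw [tsum_mul_left, tsum_geometric_two]
      _ = (D * (1/2)^m) / (2*M) := by ring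
      _ ≤ D * (1/2)^m / M := by
          have h3 : (0:ℝ) ≤ D * (1/2)^m := by positivity
          gcongr
          linarith
  have htot : natExtDist T F G ≤ (δ' * M / 2 + 2 * ε) * (1 / M) + D * (1/2)^m / M := by
    rw [natExtDist_eq, hsplit]
    exact add_le_add hhead htail
  have heq : (δ' * M / 2 + 2 * ε) * (1 / M) = 3 * δ' / 4 := by
    rw [hεdef]
    field_simp
    ring
  rw [heq] at htot
  linarith

end NatExtAux

/-- The natural extension is sensitive iff the original system is sensitive. -/
theorem natExt_sensitive_iff {X : Type*} [MetricSpace X] [CompactSpace X]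
    {T : X → X} (hT : Continuous T) (hTs : Surjective T) :
    SensitiveWith (natExtDist T) (natExtMap T) ↔ SensitiveWith dist T :=
  ⟨NatExtAux.sens_to hT hTs, NatExtAux.sens_of hT hTs⟩
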